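/- Let y ∈ ℝ^d be a unit vector, V a subspace, α > 0, and y' = (I + α P_V)y/‖(I + α P_V)y‖₂. Then ‖P_V y' (P_{V^⊥} y')ᵀ − P_V y (P_{V^⊥} y)ᵀ‖_F ≤ α·‖P_V y‖₂·‖P_{V^⊥} y‖₂. In particular, this is at most α·ρ·√(1−ρ²) ≤ αρ where ρ = ‖P_V y‖₂. -/

import Mathlib

lemma frob_eq {d : ℕ} (u w : EuclideanSpace ℝ (Fin d)) (a b : ℝ) :
    ∑ i, ∑ j, ((Matrix.vecMulVec (a • u) (b • w) - Matrix.vecMulVec u w) i j) ^ 2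
      = (a * b - 1) ^ 2 * (‖u‖ ^ 2 * ‖w‖ ^ 2) := by
  have hnu : ‖u‖ ^ 2 = ∑ i, u i ^ 2 := by
    rw [EuclideanSpace.norm_eq, Real.sq_sqrt (by positivity)]
    simp [sq_abs]
  have hnw : ‖w‖ ^ 2 = ∑ i, w i ^ 2 := by
    rw [EuclideanSpace.norm_eq, Real.sq_sqrt (by positivity)]
    simp [sq_abs]
  rw [hnu, hnw, Finset.sum_mul_sum, Finset.mul_sum]
  simp only [Matrix.sub_apply, Matrix.vecMulVec_apply, PiLp.smul_apply, smul_eq_mul]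
  apply Finset.sum_congr rfl; intro i _
  rw [Finset.mul_sum]
  apply Finset.sum_congr rfl; intro j _
  ring

set_option maxHeartbeats 2000000 in
theorem cross_term_bound {d : ℕ} (V : Submodule ℝ (EuclideanSpace ℝ (Fin d)))
    (y : EuclideanSpace ℝ (Fin d)) (hy : ‖y‖ = 1) (α ρ : ℝ) (hα : 0 < α)
    (hρ : ‖(Submodule.orthogonalProjectionOnto V y : EuclideanSpace ℝ (Fin d))‖ = ρ)
    (y' : EuclideanSpace ℝ (Fin d))
    (hy' : y' = ‖y + α • (Submodule.orthogonalProjectionOnto V y : EuclideanSpace ℝ (Fin d))‖⁻¹ •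
      (y + α • (Submodule.orthogonalProjectionOnto V y : EuclideanSpace ℝ (Fin d)))) :
    Real.sqrt (∑ i, ∑ j,
      ((Matrix.vecMulVec (Submodule.orthogonalProjectionOnto V y' : EuclideanSpace ℝ (Fin d))
          (Submodule.orthogonalProjectionOnto Vᗮ y' : EuclideanSpace ℝ (Fin d)) -
        Matrix.vecMulVec (Submodule.orthogonalProjectionOnto V y : EuclideanSpace ℝ (Fin d))
          (Submodule.orthogonalProjectionOnto Vᗮ y : EuclideanSpace ℝ (Fin d))) i j) ^ 2) ≤
      α * ‖(Submodule.orthogonalProjectionOnto V y : EuclideanSpace ℝ (Fin d))‖ *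
        ‖(Submodule.orthogonalProjectionOnto Vᗮ y : EuclideanSpace ℝ (Fin d))‖ ∧
    α * ‖(Submodule.orthogonalProjectionOnto V y : EuclideanSpace ℝ (Fin d))‖ *
        ‖(Submodule.orthogonalProjectionOnto Vᗮ y : EuclideanSpace ℝ (Fin d))‖ ≤
      α * ρ * Real.sqrt (1 - ρ ^ 2) ∧
    α * ρ * Real.sqrt (1 - ρ ^ 2) ≤ α * ρ := by
  have hρ0 : 0 ≤ ρ := hρ ▸ norm_nonneg _
  have hyuw : (Submodule.orthogonalProjectionOnto V y : EuclideanSpace ℝ (Fin d)) +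
      (Submodule.orthogonalProjectionOnto Vᗮ y : EuclideanSpace ℝ (Fin d)) = y :=
    Submodule.starProjection_add_starProjection_orthogonal (K := V) y
  have hwn : ‖(Submodule.orthogonalProjectionOnto Vᗮ y : EuclideanSpace ℝ (Fin d))‖ ^ 2 = 1 - ρ ^ 2 := by
    have h := Submodule.norm_sq_eq_add_norm_sq_projection y V
    rw [hy] at h
    have e1 : ‖Submodule.orthogonalProjectionOnto V y‖ = ρ := by rw [← hρ]; rfl
    have e2 : ‖Submodule.orthogonalProjectionOnto Vᗮ y‖ =
        ‖(Submodule.orthogonalProjectionOnto Vᗮ y : EuclideanSpace ℝ (Fin d))‖ := rfl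
    rw [e1, e2] at h
    nlinarith [h]
  have hρ2 : ρ ^ 2 ≤ 1 := by
    nlinarith [sq_nonneg ‖(Submodule.orthogonalProjectionOnto Vᗮ y : EuclideanSpace ℝ (Fin d))‖]
  have huw : inner ℝ (Submodule.orthogonalProjectionOnto V y : EuclideanSpace ℝ (Fin d))
      (Submodule.orthogonalProjectionOnto Vᗮ y : EuclideanSpace ℝ (Fin d)) = (0 : ℝ) :=
    Submodule.inner_right_of_mem_orthogonal (SetLike.coe_mem _) (SetLike.coe_mem _)
  have hN : ‖y + α • (Submodule.orthogonalProjectionOnto V y : EuclideanSpace ℝ (Fin d))‖ ^ 2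
      = 1 + ρ ^ 2 * (α ^ 2 + 2 * α) := by
    have key : ∀ u w : EuclideanSpace ℝ (Fin d), u + w = y →
        y + α • u = (1 + α) • u + w := by
      intro u w h; rw [← h]; module
    have hsplit := key _ _ hyuw
    rw [hsplit, norm_add_sq_real, real_inner_smul_left, huw, norm_smul,
      Real.norm_eq_abs, abs_of_pos (by linarith), hρ]
    nlinarith [hwn]
  have hNpos : 0 < ‖y + α • (Submodule.orthogonalProjectionOnto V y : EuclideanSpace ℝ (Fin d))‖ := by
    nlinarith [norm_nonneg (y + α • (Submodule.orthogonalProjectionOnto V y : EuclideanSpace ℝ (Fin d))),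
      hN, mul_nonneg (sq_nonneg ρ) hα.le, mul_nonneg (sq_nonneg ρ) (sq_nonneg α)]
  have hPV : (Submodule.orthogonalProjectionOnto V y' : EuclideanSpace ℝ (Fin d)) =
      (‖y + α • (Submodule.orthogonalProjectionOnto V y : EuclideanSpace ℝ (Fin d))‖⁻¹ * (1 + α)) •
        (Submodule.orthogonalProjectionOnto V y : EuclideanSpace ℝ (Fin d)) := by
    rw [hy', map_smul, map_add, map_smul, Submodule.orthogonalProjectionOnto_mem_subspace_eq_self]
    push_cast
    module
  have hPVp : (Submodule.orthogonalProjectionOnto Vᗮ y' : EuclideanSpace ℝ (Fin d)) =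
      (‖y + α • (Submodule.orthogonalProjectionOnto V y : EuclideanSpace ℝ (Fin d))‖⁻¹) •
        (Submodule.orthogonalProjectionOnto Vᗮ y : EuclideanSpace ℝ (Fin d)) := by
    rw [hy', map_smul, map_add, map_smul,
      Submodule.orthogonalProjectionOnto_apply_of_mem_orthogonal (V.le_orthogonal_orthogonal (SetLike.coe_mem _))]
    push_cast
    module
  set n : ℝ := ‖y + α • (Submodule.orthogonalProjectionOnto V y : EuclideanSpace ℝ (Fin d))‖ with hn
  refine ⟨?_, ?_, ?_⟩
  · rw [hPV, hPVp, frob_eq]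
    have ht : (n⁻¹ * (1 + α) * n⁻¹ - 1) ^ 2 ≤ α ^ 2 := by
      have h1 : n⁻¹ * (1 + α) * n⁻¹ - 1 = ((1 + α) - n ^ 2) / n ^ 2 := by
        field_simp
      rw [h1, div_pow, div_le_iff₀ (by positivity), hN]
      have hs0 : 0 ≤ ρ ^ 2 * (α + 2) := by positivity
      have hs1 : ρ ^ 2 * (α + 2) ≤ α + 2 := by nlinarith
      have hfac : 0 ≤ 2 + (α - 1) * (ρ ^ 2 * (α + 2)) := by
        rcases le_or_gt α 1 with hα1 | hα1
        · nlinarith [mul_nonneg (sub_nonneg.2 hα1) (sub_nonneg.2 hs1)]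
        · nlinarith [mul_nonneg (sub_nonneg.2 hα1.le) hs0]
      nlinarith [mul_nonneg (mul_nonneg (mul_nonneg (sq_nonneg α) hs0)
        (by linarith : (0:ℝ) ≤ 1 + α)) hfac]
    have hUW : (0 : ℝ) ≤ ‖(Submodule.orthogonalProjectionOnto V y : EuclideanSpace ℝ (Fin d))‖ ^ 2 *
        ‖(Submodule.orthogonalProjectionOnto Vᗮ y : EuclideanSpace ℝ (Fin d))‖ ^ 2 :=
      mul_nonneg (sq_nonneg _) (sq_nonneg _)
    calc Real.sqrt ((n⁻¹ * (1 + α) * n⁻¹ - 1) ^ 2 *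
          (‖(Submodule.orthogonalProjectionOnto V y : EuclideanSpace ℝ (Fin d))‖ ^ 2 *
            ‖(Submodule.orthogonalProjectionOnto Vᗮ y : EuclideanSpace ℝ (Fin d))‖ ^ 2))
        ≤ Real.sqrt ((α * ‖(Submodule.orthogonalProjectionOnto V y : EuclideanSpace ℝ (Fin d))‖ *
            ‖(Submodule.orthogonalProjectionOnto Vᗮ y : EuclideanSpace ℝ (Fin d))‖) ^ 2) := by
          apply Real.sqrt_le_sqrt
          nlinarith [mul_le_mul_of_nonneg_right ht hUW]
      _ = α * ‖(Submodule.orthogonalProjectionOnto V y : EuclideanSpace ℝ (Fin d))‖ *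
            ‖(Submodule.orthogonalProjectionOnto Vᗮ y : EuclideanSpace ℝ (Fin d))‖ :=
          Real.sqrt_sq (by positivity)
  · have hwn' : ‖(Submodule.orthogonalProjectionOnto Vᗮ y : EuclideanSpace ℝ (Fin d))‖ =
        Real.sqrt (1 - ρ ^ 2) := by
      rw [← hwn, Real.sqrt_sq (norm_nonneg _)]
    rw [hρ, hwn']
  · have h1 : Real.sqrt (1 - ρ ^ 2) ≤ 1 := by
      exact (Real.sqrt_le_one (x := 1 - ρ ^ 2)).2 (by nlinarith [sq_nonneg ρ])
    nlinarith [mul_nonneg hα.le hρ0, mul_le_mul_of_nonneg_left h1 (mul_nonneg hα.le hρ0)]
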